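/- (Theorem 4) Consider system (4) with standard incidence Φ(x) = βx, β ∈ (0,1], and constant recruitment B(N) = B > 0. If R₀ = σ^E σ^I γ^E β / ((1 − σ^E(1−γ^E))(1 − σ^I(1−γ^I))) > 1, then the system is uniformly persistent: there exists ε > 0 such that every solution with X(0) ∈ ℝ⁴₊, N(0) > 0 and E(0) + I(0) > 0 satisfies liminf_{t→∞} (E(t) + I(t)) > ε. -/

import Mathlib

lemma seirs_aux_geom (d lam : ℝ) (hd : 0 ≤ d) (hl0 : 0 ≤ lam) (hl1 : lam < 1)
    (u : ℕ → ℝ) : ∀ n : ℕ, (∀ k < n, u (k+1) ≤ d + lam * u k) →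
      u n ≤ d / (1 - lam) + lam ^ n * u 0 := by
  intro n
  induction n with
  | zero =>
    intro _
    have : 0 ≤ d / (1 - lam) := div_nonneg hd (by linarith)
    simp only [pow_zero, one_mul]
    linarith
  | succ n ih =>
    intro h
    have h1 : u n ≤ d / (1 - lam) + lam ^ n * u 0 := ih (fun k hk => h k (by omega))
    have h2 : u (n+1) ≤ d + lam * u n := h n (by omega)
    have h3 : lam * u n ≤ lam * (d / (1 - lam) + lam ^ n * u 0) :=
      mul_le_mul_of_nonneg_left h1 hl0
    have hfe : d + lam * (d / (1 - lam) + lam ^ n * u 0)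
        = d / (1 - lam) + lam ^ (n+1) * u 0 := by
      have : (1:ℝ) - lam ≠ 0 := by linarith
      field_simp
      ring
    linarith

lemma seirs_aux_grow (ρ : ℝ) (hρ : 0 ≤ ρ) (v : ℕ → ℝ) :
    ∀ n : ℕ, (∀ k < n, ρ * v k ≤ v (k+1)) → ρ ^ n * v 0 ≤ v n := by
  intro n
  induction n with
  | zero => intro _; simp
  | succ n ih =>
    intro h
    have h1 : ρ ^ n * v 0 ≤ v n := ih (fun k hk => h k (by omega))
    have h2 : ρ * v n ≤ v (n+1) := h n (by omega)
    calc ρ ^ (n+1) * v 0 = ρ * (ρ ^ n * v 0) := by ring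
    _ ≤ ρ * v n := mul_le_mul_of_nonneg_left h1 hρ
    _ ≤ v (n+1) := h2

set_option maxHeartbeats 2000000 in
/-- Theorem 4: for system (4) with standard incidence `Φ(x) = βx` and
constant recruitment `B > 0`, if `R₀ > 1` then the system is uniformly persistent in
the infected compartments. -/
theorem seirs_uniform_persistence
    (σS σE σI σR γE γI γR β B : ℝ)
    (hσS : σS ∈ Set.Ioo (0:ℝ) 1) (hσE : σE ∈ Set.Ioo (0:ℝ) 1)
    (hσI : σI ∈ Set.Ioo (0:ℝ) 1) (hσR : σR ∈ Set.Ioo (0:ℝ) 1)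
    (hγE : γE ∈ Set.Ioo (0:ℝ) 1) (hγI : γI ∈ Set.Ioo (0:ℝ) 1)
    (hγR : γR ∈ Set.Ioo (0:ℝ) 1)
    (hβ : β ∈ Set.Ioc (0:ℝ) 1) (hB : 0 < B)
    (hR0 : 1 < σE * σI * γE * β /
        ((1 - σE * (1 - γE)) * (1 - σI * (1 - γI)))) :
    ∃ ε > (0:ℝ), ∀ S E I R : ℕ → ℝ,
      0 ≤ S 0 → 0 ≤ E 0 → 0 ≤ I 0 → 0 ≤ R 0 →
      0 < S 0 + E 0 + I 0 + R 0 →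
      0 < E 0 + I 0 →
      (∀ t, S (t+1) = B + σS * γR * R t
          + σS * (1 - β * (I t / (S t + E t + I t + R t))) * S t) →
      (∀ t, E (t+1) = σE * β * (I t / (S t + E t + I t + R t)) * S t
          + σE * (1 - γE) * E t) →
      (∀ t, I (t+1) = σI * γE * E t + σI * (1 - γI) * I t) →
      (∀ t, R (t+1) = σR * γI * I t + σR * (1 - γR) * R t) →
      ε < Filter.liminf (fun t => E t + I t) Filter.atTop := by
  obtain ⟨hσS0, hσS1⟩ := hσS
  obtain ⟨hσE0, hσE1⟩ := hσE
  obtain ⟨hσI0, hσI1⟩ := hσI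
  obtain ⟨hσR0, hσR1⟩ := hσR
  obtain ⟨hγE0, hγE1⟩ := hγE
  obtain ⟨hγI0, hγI1⟩ := hγI
  obtain ⟨hγR0, hγR1⟩ := hγR
  obtain ⟨hβ0, hβ1⟩ := hβ
  set a := σE * (1 - γE) with ha_def
  set b := σI * (1 - γI) with hb_def
  set lam := σR * (1 - γR) with hlam_def
  have ha0 : 0 < a := mul_pos hσE0 (by linarith)
  have ha1 : a < 1 := by
    rw [ha_def]; linarith only [hσE1, mul_pos hσE0 hγE0]
  have hb0 : 0 < b := mul_pos hσI0 (by linarith)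
  have hb1 : b < 1 := by
    rw [hb_def]; linarith only [hσI1, mul_pos hσI0 hγI0]
  have hlam0 : 0 < lam := mul_pos hσR0 (by linarith)
  have hlam1 : lam < 1 := by
    rw [hlam_def]; linarith only [hσR1, mul_pos hσR0 hγR0]
  have hA0 : 0 < σE * σI * γE * β := by positivity
  have hden : 0 < (1 - a) * (1 - b) := mul_pos (by linarith) (by linarith)
  rw [lt_div_iff₀ hden, one_mul] at hR0
  -- hR0 : (1-a)*(1-b) < σE*σI*γE*β
  set c := ((1 - a) * (1 - b) / (σE * σI * γE * β) + 1) / 2 with hc_def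
  have hfrac1 : (1 - a) * (1 - b) / (σE * σI * γE * β) < 1 := (div_lt_one hA0).mpr hR0
  have hfrac0 : 0 < (1 - a) * (1 - b) / (σE * σI * γE * β) := div_pos hden hA0
  have hc0 : 0 < c := by rw [hc_def]; linarith
  have hc1 : c < 1 := by rw [hc_def]; linarith
  have hcA : (1 - a) * (1 - b) < c * (σE * σI * γE * β) := by
    have h1 : (1 - a) * (1 - b) / (σE * σI * γE * β) < c := by rw [hc_def]; linarith
    exact (div_lt_iff₀ hA0).mp h1
  set t0 := ((1 - a) / (σI * γE) + σE * β * c / (1 - b)) / 2 with ht0_def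
  have hLU : (1 - a) / (σI * γE) < σE * β * c / (1 - b) := by
    rw [div_lt_div_iff₀ (by positivity) (by linarith)]
    have he : c * (σE * σI * γE * β) = σE * β * c * (σI * γE) := by ring
    linarith only [hcA, he]
  have hL : (1 - a) / (σI * γE) < t0 := by rw [ht0_def]; linarith
  have hU : t0 < σE * β * c / (1 - b) := by rw [ht0_def]; linarith
  have ht00 : 0 < t0 :=
    lt_trans (div_pos (by linarith) (by positivity)) hL
  set ρ := min (a + t0 * (σI * γE)) (b + σE * β * c / t0) with hρ_def
  have hρ1 : 1 < ρ := by
    rw [hρ_def]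
    apply lt_min
    · have := (div_lt_iff₀ (by positivity : (0:ℝ) < σI * γE)).mp hL
      linarith
    · have h3 : t0 * (1 - b) < σE * β * c := by
        have := (lt_div_iff₀ (by linarith : (0:ℝ) < 1 - b)).mp hU
        linarith only [this]
      have h2 : 1 - b < σE * β * c / t0 := by
        rw [lt_div_iff₀ ht00]
        linarith only [h3]
      linarith
  have hKey1 : ρ ≤ a + t0 * (σI * γE) := min_le_left _ _
  have hKey2 : ρ * t0 ≤ b * t0 + σE * β * c := by
    have h1 : ρ ≤ b + σE * β * c / t0 := min_le_right _ _
    have h2 : ρ * t0 ≤ (b + σE * β * c / t0) * t0 := mul_le_mul_of_nonneg_right h1 ht00.le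
    have h3 : (b + σE * β * c / t0) * t0 = b * t0 + σE * β * c := by
      field_simp
    linarith
  set m := min a b with hm_def
  have hm0 : 0 < m := lt_min ha0 hb0
  have hm1 : m < 1 := lt_of_le_of_lt (min_le_left _ _) ha1
  have hma : m ≤ a := min_le_left _ _
  have hmb : m ≤ b := min_le_right _ _
  set σbar := max (max σS σE) (max σI σR) with hσbar_def
  have hSσb : σS ≤ σbar := le_trans (le_max_left _ _) (le_max_left _ _)
  have hEσb : σE ≤ σbar := le_trans (le_max_right _ _) (le_max_left _ _)
  have hIσb : σI ≤ σbar := le_trans (le_max_left _ _) (le_max_right _ _)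
  have hRσb : σR ≤ σbar := le_trans (le_max_right _ _) (le_max_right _ _)
  have hσb0 : 0 < σbar := lt_of_lt_of_le hσS0 hSσb
  have hσb1 : σbar < 1 := by
    rw [hσbar_def]
    exact max_lt (max_lt hσS1 hσE1) (max_lt hσI1 hσR1)
  set K := B / (1 - σbar) + 1 with hK_def
  have hK0 : 0 < K := by
    have : 0 < B / (1 - σbar) := div_pos hB (by linarith)
    rw [hK_def]; linarith
  set C' := σR * γI / (1 - lam) with hC'_def
  have hC'0 : 0 ≤ C' := div_nonneg (by positivity) (by linarith)
  set η := B * (1 - c) / (C' + 2) with hη_def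
  have hη0 : 0 < η := div_pos (mul_pos hB (by linarith)) (by linarith)
  have hCη : (C' + 2) * η = B * (1 - c) := by
    rw [hη_def]
    field_simp
  obtain ⟨T1, hT1⟩ := exists_pow_lt_of_lt_one (show (0:ℝ) < η / K from div_pos hη0 hK0) hlam1
  have hT1K : lam ^ T1 * K ≤ η := by
    have := (lt_div_iff₀ hK0).mp hT1
    linarith
  set q' := min 1 t0 with hq'_def
  set p' := max 1 t0 with hp'_def
  have hq'0 : 0 < q' := lt_min one_pos ht00
  have hp'0 : 0 < p' := lt_of_lt_of_le one_pos (le_max_left _ _)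
  have hq'1 : q' ≤ 1 := min_le_left _ _
  have hq't : q' ≤ t0 := min_le_right _ _
  have hp'1 : 1 ≤ p' := le_max_left _ _
  have hp't : t0 ≤ p' := le_max_right _ _
  set ε' := m ^ (T1 + 1) * (q' * η) / p' with hε'_def
  have hε'0 : 0 < ε' := div_pos (mul_pos (pow_pos hm0 _) (mul_pos hq'0 hη0)) hp'0
  have hVlow : ∀ x y : ℝ, 0 ≤ x → 0 ≤ y → q' * (x + y) ≤ x + t0 * y := by
    intro x y hx hy
    linarith only [mul_le_mul_of_nonneg_right hq'1 hx, mul_le_mul_of_nonneg_right hq't hy]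
  have hVhigh : ∀ x y : ℝ, 0 ≤ x → 0 ≤ y → x + t0 * y ≤ p' * (x + y) := by
    intro x y hx hy
    linarith only [mul_le_mul_of_nonneg_right hp'1 hx, mul_le_mul_of_nonneg_right hp't hy]
  refine ⟨ε' / 2, by linarith, ?_⟩
  intro S E I R hS0 hE0 hI0 hR0' hN0 hEI0 hSrec hErec hIrec hRrec
  rw [show (∀ t, E (t+1) = σE * β * (I t / (S t + E t + I t + R t)) * S t
      + σE * (1 - γE) * E t) = (∀ t, E (t+1) = σE * β * (I t / (S t + E t + I t + R t)) * S t
      + a * E t) from rfl] at hErec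
  rw [show (∀ t, I (t+1) = σI * γE * E t + σI * (1 - γI) * I t)
      = (∀ t, I (t+1) = σI * γE * E t + b * I t) from rfl] at hIrec
  rw [show (∀ t, R (t+1) = σR * γI * I t + σR * (1 - γR) * R t)
      = (∀ t, R (t+1) = σR * γI * I t + lam * R t) from rfl] at hRrec
  -- positivity of the state
  have hpos : ∀ t, 0 ≤ S t ∧ 0 ≤ E t ∧ 0 ≤ I t ∧ 0 ≤ R t ∧
      0 < S t + E t + I t + R t := by
    intro t
    induction t with
    | zero => exact ⟨hS0, hE0, hI0, hR0', hN0⟩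
    | succ t ih =>
      obtain ⟨h1, h2, h3, h4, h5⟩ := ih
      have hIN0 : 0 ≤ I t / (S t + E t + I t + R t) := div_nonneg h3 h5.le
      have hIN1 : I t / (S t + E t + I t + R t) ≤ 1 :=
        div_le_one_of_le₀ (by linarith) h5.le
      have hfrac : 0 ≤ 1 - β * (I t / (S t + E t + I t + R t)) := by
        linarith only [hβ1, mul_nonneg hβ0.le (sub_nonneg.mpr hIN1),
          mul_nonneg hβ0.le hIN0]
      have eS : 0 ≤ S (t+1) := by
        rw [hSrec t]
        have e1 : 0 ≤ σS * γR * R t := by positivity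
        have e2 : 0 ≤ σS * (1 - β * (I t / (S t + E t + I t + R t))) * S t :=
          mul_nonneg (mul_nonneg hσS0.le hfrac) h1
        linarith only [e1, e2, hB]
      have eE : 0 ≤ E (t+1) := by
        rw [hErec t]
        have e1 : 0 ≤ σE * β * (I t / (S t + E t + I t + R t)) * S t := by positivity
        have e2 : 0 ≤ a * E t := mul_nonneg ha0.le h2
        linarith only [e1, e2]
      have eI : 0 ≤ I (t+1) := by
        rw [hIrec t]
        have e1 : 0 ≤ σI * γE * E t := by positivity
        have e2 : 0 ≤ b * I t := mul_nonneg hb0.le h3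
        linarith only [e1, e2]
      have eR : 0 ≤ R (t+1) := by
        rw [hRrec t]
        have e1 : 0 ≤ σR * γI * I t := by positivity
        have e2 : 0 ≤ lam * R t := mul_nonneg hlam0.le h4
        linarith only [e1, e2]
      have eBS : B ≤ S (t+1) := by
        rw [hSrec t]
        have e1 : 0 ≤ σS * γR * R t := by positivity
        have e2 : 0 ≤ σS * (1 - β * (I t / (S t + E t + I t + R t))) * S t :=
          mul_nonneg (mul_nonneg hσS0.le hfrac) h1
        linarith only [e1, e2]
      exact ⟨eS, eE, eI, eR, by linarith only [eE, eI, eR, eBS, hB]⟩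
  -- S t ≥ B for t ≥ 1
  have hSB : ∀ t, 1 ≤ t → B ≤ S t := by
    intro t ht
    obtain ⟨u, rfl⟩ : ∃ u, t = u + 1 := ⟨t - 1, by omega⟩
    obtain ⟨h1, h2, h3, h4, h5⟩ := hpos u
    have hIN0 : 0 ≤ I u / (S u + E u + I u + R u) := div_nonneg h3 h5.le
    have hIN1 : I u / (S u + E u + I u + R u) ≤ 1 :=
      div_le_one_of_le₀ (by linarith) h5.le
    have hfrac : 0 ≤ 1 - β * (I u / (S u + E u + I u + R u)) := by
      linarith only [hβ1, mul_nonneg hβ0.le (sub_nonneg.mpr hIN1),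
        mul_nonneg hβ0.le hIN0]
    rw [hSrec u]
    have e1 : 0 ≤ σS * γR * R u := by positivity
    have e2 : 0 ≤ σS * (1 - β * (I u / (S u + E u + I u + R u))) * S u :=
      mul_nonneg (mul_nonneg hσS0.le hfrac) h1
    linarith only [e1, e2]
  -- total population recursion bound
  have hNstep : ∀ t, S (t+1) + E (t+1) + I (t+1) + R (t+1)
      ≤ B + σbar * (S t + E t + I t + R t) := by
    intro t
    obtain ⟨h1, h2, h3, h4, h5⟩ := hpos t
    have hIN0 : 0 ≤ I t / (S t + E t + I t + R t) := div_nonneg h3 h5.le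
    have hIN1 : I t / (S t + E t + I t + R t) ≤ 1 :=
      div_le_one_of_le₀ (by linarith) h5.le
    set y := I t / (S t + E t + I t + R t) with hy_def
    have hy0 : 0 ≤ β * y := mul_nonneg hβ0.le hIN0
    have hy1 : β * y ≤ 1 := by
      have := mul_le_mul_of_nonneg_left hIN1 hβ0.le
      linarith only [this, hβ1]
    rw [hSrec t, hErec t, hIrec t, hRrec t]
    have cS : σS * (1 - β * y) + σE * (β * y) ≤ σbar := by
      linarith only [mul_nonneg (by linarith only [hSσb] : (0:ℝ) ≤ σbar - σS)
          (by linarith only [hy1] : (0:ℝ) ≤ 1 - β * y),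
        mul_nonneg (by linarith only [hEσb] : (0:ℝ) ≤ σbar - σE) hy0]
    have cE : a + σI * γE ≤ σbar := by
      rw [ha_def]
      linarith only [mul_nonneg (by linarith only [hEσb] : (0:ℝ) ≤ σbar - σE)
          (by linarith only [hγE1] : (0:ℝ) ≤ 1 - γE),
        mul_nonneg (by linarith only [hIσb] : (0:ℝ) ≤ σbar - σI) hγE0.le]
    have cI : b + σR * γI ≤ σbar := by
      rw [hb_def]
      linarith only [mul_nonneg (by linarith only [hIσb] : (0:ℝ) ≤ σbar - σI)
          (by linarith only [hγI1] : (0:ℝ) ≤ 1 - γI),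
        mul_nonneg (by linarith only [hRσb] : (0:ℝ) ≤ σbar - σR) hγI0.le]
    have cR : σS * γR + lam ≤ σbar := by
      rw [hlam_def]
      linarith only [mul_nonneg (by linarith only [hRσb] : (0:ℝ) ≤ σbar - σR)
          (by linarith only [hγR1] : (0:ℝ) ≤ 1 - γR),
        mul_nonneg (by linarith only [hSσb] : (0:ℝ) ≤ σbar - σS) hγR0.le]
    have mS := mul_le_mul_of_nonneg_right cS h1
    have mE := mul_le_mul_of_nonneg_right cE h2
    have mI := mul_le_mul_of_nonneg_right cI h3
    have mR := mul_le_mul_of_nonneg_right cR h4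
    linarith only [mS, mE, mI, mR]
  have hNbound : ∀ t, S t + E t + I t + R t
      ≤ B / (1 - σbar) + σbar ^ t * (S 0 + E 0 + I 0 + R 0) := by
    intro t
    exact seirs_aux_geom B σbar hB.le hσb0.le hσb1
      (fun t => S t + E t + I t + R t) t (fun k _ => hNstep k)
  obtain ⟨T2, hT2⟩ := exists_pow_lt_of_lt_one
    (show (0:ℝ) < 1 / (S 0 + E 0 + I 0 + R 0) from by positivity) hσb1
  have hNK : ∀ t, T2 ≤ t → S t + E t + I t + R t ≤ K := by
    intro t ht
    have h1 := hNbound t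
    have h2 : σbar ^ t ≤ σbar ^ T2 := pow_le_pow_of_le_one hσb0.le hσb1.le ht
    have h4 : σbar ^ T2 * (S 0 + E 0 + I 0 + R 0) ≤ 1 := by
      have h5 := mul_le_mul_of_nonneg_right hT2.le hN0.le
      rw [one_div, inv_mul_cancel₀ (ne_of_gt hN0)] at h5
      exact h5
    have h3 : σbar ^ t * (S 0 + E 0 + I 0 + R 0) ≤ 1 := by
      linarith only [h4, mul_le_mul_of_nonneg_right h2 hN0.le]
    rw [hK_def]
    linarith only [h1, h3]
  -- E + I always positive
  have hEIpos : ∀ t, 0 < E t + I t := by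
    intro t
    induction t with
    | zero => exact hEI0
    | succ t ih =>
      obtain ⟨h1, h2, h3, h4, h5⟩ := hpos t
      have e1 : 0 ≤ σE * β * (I t / (S t + E t + I t + R t)) * S t := by positivity
      have e2 : 0 ≤ σI * γE * E t := by positivity
      rw [hErec t, hIrec t]
      linarith only [e1, e2, mul_le_mul_of_nonneg_right hma h2,
        mul_le_mul_of_nonneg_right hmb h3, mul_pos hm0 ih]
  -- V shrinks at most by factor m
  have hVshrink : ∀ t, m * (E t + t0 * I t) ≤ E (t+1) + t0 * I (t+1) := by
    intro t
    obtain ⟨h1, h2, h3, h4, h5⟩ := hpos t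
    rw [hErec t, hIrec t]
    have e1 : 0 ≤ σE * β * (I t / (S t + E t + I t + R t)) * S t := by positivity
    have e2 : 0 ≤ t0 * (σI * γE * E t) := by positivity
    have s3 : m * E t ≤ a * E t := mul_le_mul_of_nonneg_right hma h2
    have s4 : m * (t0 * I t) ≤ b * (t0 * I t) :=
      mul_le_mul_of_nonneg_right hmb (mul_nonneg ht00.le h3)
    linarith only [e1, e2, s3, s4]
  -- V grows by factor ρ when S/N ≥ c
  have hVgrow : ∀ t, c * (S t + E t + I t + R t) ≤ S t →
      ρ * (E t + t0 * I t) ≤ E (t+1) + t0 * I (t+1) := by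
    intro t hcS
    obtain ⟨h1, h2, h3, h4, h5⟩ := hpos t
    have hNne : S t + E t + I t + R t ≠ 0 := ne_of_gt h5
    have key : c * I t ≤ I t / (S t + E t + I t + R t) * S t := by
      have heq : c * I t
          = I t / (S t + E t + I t + R t) * (c * (S t + E t + I t + R t)) := by
        field_simp
      rw [heq]
      exact mul_le_mul_of_nonneg_left hcS (div_nonneg h3 h5.le)
    have key2 : σE * β * (c * I t)
        ≤ σE * β * (I t / (S t + E t + I t + R t) * S t) :=
      mul_le_mul_of_nonneg_left key (by positivity)
    rw [hErec t, hIrec t]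
    have s1 : ρ * E t ≤ (a + t0 * (σI * γE)) * E t := mul_le_mul_of_nonneg_right hKey1 h2
    have s2 : ρ * t0 * I t ≤ (b * t0 + σE * β * c) * I t :=
      mul_le_mul_of_nonneg_right hKey2 h3
    linarith only [s1, s2, key2]
  -- fraction bound: small infected + small R implies S/N ≥ c
  have hSN : ∀ t, 1 ≤ t → E t + I t ≤ η → R t ≤ (C' + 1) * η →
      c * (S t + E t + I t + R t) ≤ S t := by
    intro t ht hEI hRt
    have hSBt := hSB t ht
    obtain ⟨h1, h2, h3, h4, h5⟩ := hpos t
    have hEIR : E t + I t + R t ≤ (C' + 2) * η := by linarith only [hEI, hRt, hη0]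
    have h6 : c * (E t + I t + R t) ≤ c * ((C' + 2) * η) :=
      mul_le_mul_of_nonneg_left hEIR hc0.le
    have h8 : c * ((C' + 2) * η) = c * (B * (1 - c)) := by rw [hCη]
    have h7 : c * B ≤ S t := by
      linarith only [mul_nonneg (by linarith only [hc1] : (0:ℝ) ≤ 1 - c) hB.le, hSBt]
    have h9 : 0 ≤ (1 - c) * (S t - c * B) :=
      mul_nonneg (by linarith only [hc1]) (by linarith only [h7])
    linarith only [h6, h8, h9]
  -- E+I exceeds η at arbitrarily late times
  have hio : ∀ t1 : ℕ, ∃ t, t1 ≤ t ∧ η ≤ E t + I t := by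
    intro t1
    by_contra hcon
    push_neg at hcon
    set w := max t1 (max T2 1) with hw_def
    have hwt1 : t1 ≤ w := le_max_left _ _
    have hwT2 : T2 ≤ w := le_trans (le_max_left _ _) (le_max_right _ _)
    have hw1 : 1 ≤ w := le_trans (le_max_right _ _) (le_max_right _ _)
    have hC'e : σR * γI * η / (1 - lam) = C' * η := by
      rw [hC'_def]; field_simp
    have hdec : ∀ k, R (w+1+k) ≤ σR * γI * η / (1 - lam) + lam ^ k * R (w+1+0) := by
      intro k
      refine seirs_aux_geom (σR * γI * η) lam (by positivity) hlam0.le hlam1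
        (fun j => R (w+1+j)) k (fun j hj => ?_)
      show R (w+1+(j+1)) ≤ σR * γI * η + lam * R (w+1+j)
      have hidx : w+1+(j+1) = (w+1+j)+1 := by omega
      rw [hidx, hRrec (w+1+j)]
      have hIu : I (w+1+j) ≤ η := by
        have h := hcon (w+1+j) (by omega)
        have h2 := (hpos (w+1+j)).2.1
        linarith only [h, h2]
      have h3 := mul_le_mul_of_nonneg_left hIu (by positivity : (0:ℝ) ≤ σR * γI)
      linarith only [h3]
    have hRsmall : ∀ t, w+1+T1 ≤ t → R t ≤ (C'+1) * η := by
      intro t ht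
      have hk : t = w+1+(t-(w+1)) := by omega
      have h1 := hdec (t-(w+1))
      rw [← hk] at h1
      have h2 : lam ^ (t-(w+1)) ≤ lam ^ T1 :=
        pow_le_pow_of_le_one hlam0.le hlam1.le (by omega)
      have h3 : R (w+1+0) ≤ K := by
        have h4 := hNK (w+1+0) (by omega)
        have h5 := hpos (w+1+0)
        linarith only [h4, h5.1, h5.2.1, h5.2.2.1]
      have h6 : lam ^ (t-(w+1)) * R (w+1+0) ≤ lam ^ T1 * K :=
        mul_le_mul h2 h3 (hpos _).2.2.2.1 (pow_nonneg hlam0.le _)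
      linarith only [h1, h6, hT1K, hC'e]
    have hgrow : ∀ k, ρ * (E (w+1+T1+k) + t0 * I (w+1+T1+k))
        ≤ E (w+1+T1+(k+1)) + t0 * I (w+1+T1+(k+1)) := by
      intro k
      have hidx : w+1+T1+(k+1) = (w+1+T1+k)+1 := by omega
      rw [hidx]
      refine hVgrow (w+1+T1+k) (hSN _ (by omega) ?_ (hRsmall _ (by omega)))
      exact (hcon _ (by omega)).le
    have hV0 : 0 < E (w+1+T1+0) + t0 * I (w+1+T1+0) := by
      have h1 := hEIpos (w+1+T1+0)
      have h2 := hVlow (E (w+1+T1+0)) (I (w+1+T1+0)) (hpos _).2.1 (hpos _).2.2.1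
      linarith only [h1, h2, mul_pos hq'0 h1]
    obtain ⟨n, hn⟩ := pow_unbounded_of_one_lt
      (p' * η / (E (w+1+T1+0) + t0 * I (w+1+T1+0))) hρ1
    have h7 : ρ ^ n * (E (w+1+T1+0) + t0 * I (w+1+T1+0))
        ≤ E (w+1+T1+n) + t0 * I (w+1+T1+n) :=
      seirs_aux_grow ρ (by linarith only [hρ1])
        (fun k => E (w+1+T1+k) + t0 * I (w+1+T1+k)) n (fun k _ => hgrow k)
    have h8 : E (w+1+T1+n) + t0 * I (w+1+T1+n) ≤ p' * η := by
      have h9 := hVhigh (E (w+1+T1+n)) (I (w+1+T1+n)) (hpos _).2.1 (hpos _).2.2.1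
      have h10 := hcon (w+1+T1+n) (by omega)
      have h11 := mul_le_mul_of_nonneg_left h10.le hp'0.le
      linarith only [h9, h11]
    have h12 : p' * η < ρ ^ n * (E (w+1+T1+0) + t0 * I (w+1+T1+0)) :=
      (div_lt_iff₀ hV0).mp hn
    linarith only [h7, h8, h12]
  obtain ⟨s0, hs0ge, hs0EI⟩ := hio (max T2 1)
  have hs0T2 : T2 ≤ s0 := le_trans (le_max_left _ _) hs0ge
  have hs01 : 1 ≤ s0 := le_trans (le_max_right _ _) hs0ge
  -- main excursion induction
  have Pmain : ∀ n : ℕ, ∃ s, s0 ≤ s ∧ s ≤ s0 + n ∧ η ≤ E s + I s ∧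
      (∀ u, s < u → u ≤ s0 + n → E u + I u < η) ∧
      m ^ (min (s0 + n - s) (T1+1)) * (q' * η) ≤ E (s0+n) + t0 * I (s0+n) := by
    intro n
    induction n with
    | zero =>
      simp only [Nat.add_zero]
      refine ⟨s0, le_refl _, le_refl _, hs0EI, fun u h1 h2 => absurd h1 (by omega), ?_⟩
      rw [Nat.sub_self]
      simp only [Nat.zero_min, pow_zero, one_mul]
      have h2 := hVlow (E s0) (I s0) (hpos _).2.1 (hpos _).2.2.1
      linarith only [h2, mul_le_mul_of_nonneg_left hs0EI hq'0.le]
    | succ n ih =>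
      have hidx : s0 + (n+1) = (s0 + n) + 1 := by omega
      rw [hidx]
      obtain ⟨s, hss0, hsn, hsEI, hsmall, hV⟩ := ih
      by_cases hbig : η ≤ E (s0+n+1) + I (s0+n+1)
      · refine ⟨s0+n+1, by omega, le_refl _, hbig,
          fun u h1 h2 => absurd h1 (by omega), ?_⟩
        have h0 : s0 + n + 1 - (s0 + n + 1) = 0 := by omega
        rw [h0]
        simp only [Nat.zero_min, pow_zero, one_mul]
        have h2 := hVlow (E (s0+n+1)) (I (s0+n+1)) (hpos _).2.1 (hpos _).2.2.1
        linarith only [h2, mul_le_mul_of_nonneg_left hbig hq'0.le]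
      · push_neg at hbig
        have hsmall' : ∀ u, s < u → u ≤ s0+n+1 → E u + I u < η := by
          intro u h1 h2
          rcases Nat.lt_or_ge u (s0+n+1) with h|h
          · exact hsmall u h1 (by omega)
          · have he : u = s0+n+1 := by omega
            rw [he]; exact hbig
        by_cases hk : s0 + n - s ≤ T1
        · refine ⟨s, hss0, by omega, hsEI, hsmall', ?_⟩
          have h1 : min (s0+n+1-s) (T1+1) = min (s0+n-s) (T1+1) + 1 := by omega
          rw [h1, pow_succ]
          have hstep := hVshrink (s0+n)
          have h2 := mul_le_mul_of_nonneg_left hV hm0.le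
          linarith only [h2, hstep]
        · have hRt : R (s0+n) ≤ (C'+1) * η := by
            have hdec2 := seirs_aux_geom (σR * γI * η) lam (by positivity) hlam0.le hlam1
              (fun j => R (s+1+j)) (s0+n-(s+1)) (fun j hj => by
                show R (s+1+(j+1)) ≤ σR * γI * η + lam * R (s+1+j)
                have hidx2 : s+1+(j+1) = (s+1+j)+1 := by omega
                rw [hidx2, hRrec (s+1+j)]
                have hIu : I (s+1+j) ≤ η := by
                  have h := hsmall (s+1+j) (by omega) (by omega)
                  have h2 := (hpos (s+1+j)).2.1
                  linarith only [h, h2]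
                have h3 := mul_le_mul_of_nonneg_left hIu (by positivity : (0:ℝ) ≤ σR * γI)
                linarith only [h3])
            have hdec2' : R (s+1+(s0+n-(s+1)))
                ≤ σR * γI * η / (1 - lam) + lam ^ (s0+n-(s+1)) * R (s+1+0) := hdec2
            have hkx : s+1+(s0+n-(s+1)) = s0+n := by omega
            rw [hkx] at hdec2'
            have h2 : lam ^ (s0+n-(s+1)) ≤ lam ^ T1 :=
              pow_le_pow_of_le_one hlam0.le hlam1.le (by omega)
            have h3 : R (s+1+0) ≤ K := by
              have h4 := hNK (s+1+0) (by omega)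
              have h5 := hpos (s+1+0)
              linarith only [h4, h5.1, h5.2.1, h5.2.2.1]
            have h6 : lam ^ (s0+n-(s+1)) * R (s+1+0) ≤ lam ^ T1 * K :=
              mul_le_mul h2 h3 (hpos _).2.2.2.1 (pow_nonneg hlam0.le _)
            have hC'e : σR * γI * η / (1 - lam) = C' * η := by
              rw [hC'_def]; field_simp
            linarith only [hdec2', h6, hT1K, hC'e]
          have hEIt : E (s0+n) + I (s0+n) < η := hsmall (s0+n) (by omega) (le_refl _)
          have hgrow := hVgrow (s0+n) (hSN (s0+n) (by omega) hEIt.le hRt)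
          refine ⟨s, hss0, by omega, hsEI, hsmall', ?_⟩
          have h1 : min (s0+n-s) (T1+1) = T1+1 := by omega
          have h2 : min (s0+n+1-s) (T1+1) = T1+1 := by omega
          rw [h2]
          rw [h1] at hV
          have hVpos : 0 < E (s0+n) + t0 * I (s0+n) := by
            have h3 := mul_pos (pow_pos hm0 (T1+1)) (mul_pos hq'0 hη0)
            linarith only [hV, h3]
          linarith only [hgrow, hV, mul_pos (sub_pos.mpr hρ1) hVpos]
  have hmain : ∀ t, s0 ≤ t → ε' ≤ E t + I t := by
    intro t ht
    obtain ⟨s, h1, h2, h3, h4, h5⟩ := Pmain (t - s0)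
    have hts : s0 + (t - s0) = t := by omega
    rw [hts] at h5
    have hmono : m ^ (T1+1) ≤ m ^ (min (t - s) (T1+1)) :=
      pow_le_pow_of_le_one hm0.le hm1.le (min_le_right _ _)
    have h6 : m ^ (T1+1) * (q' * η) ≤ E t + t0 * I t := by
      have h7 := mul_le_mul_of_nonneg_right hmono (mul_nonneg hq'0.le hη0.le)
      linarith only [h7, h5]
    have h8 := hVhigh (E t) (I t) (hpos t).2.1 (hpos t).2.2.1
    rw [hε'_def, div_le_iff₀ hp'0]
    linarith only [h6, h8]
  have hev1 : ∀ᶠ t in Filter.atTop, ε' ≤ E t + I t :=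
    Filter.eventually_atTop.mpr ⟨s0, hmain⟩
  have hevK : ∀ᶠ t in Filter.atTop, E t + I t ≤ K :=
    Filter.eventually_atTop.mpr ⟨T2, fun t ht => by
      have h1 := hNK t ht
      have h2 := hpos t
      linarith only [h1, h2.1, h2.2.2.2.1]⟩
  have hbd : Filter.IsBoundedUnder (· ≤ ·) Filter.atTop (fun t => E t + I t) :=
    ⟨K, by rwa [Filter.eventually_map]⟩
  have hle : ε' ≤ Filter.liminf (fun t => E t + I t) Filter.atTop :=
    Filter.le_liminf_of_le hbd.isCoboundedUnder_ge hev1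
  linarith only [hε'0, hle]
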